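/- Let p be an odd prime, k and ℓ positive integers, q = p^k, Q = p^ℓ. The map x ↦ x^{Q+1} on F_{q²} is planar if and only if ℓ/gcd(k,ℓ) is even. -/

import Mathlib

section Aux

lemma my_gcd_pow_sub_one (x m n : ℕ) (hx : 2 ≤ x) (hm : 0 < m) :
    Nat.gcd (x ^ m - 1) (x ^ n - 1) = x ^ Nat.gcd m n - 1 := by
  have hx1 : 1 ≤ x := by omega
  have hxp : ∀ j : ℕ, 1 ≤ x ^ j := fun j => Nat.one_le_pow _ _ (by omega)
  set d := Nat.gcd (x ^ m - 1) (x ^ n - 1) with hd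
  have key : ∀ i j : ℕ, i ∣ j → x ^ i - 1 ∣ x ^ j - 1 := by
    rintro i j ⟨c, rfl⟩
    rw [pow_mul]
    simpa using Nat.sub_dvd_pow_sub_pow (x := x ^ i) (y := 1) (n := c)
  apply Nat.dvd_antisymm
  · have hd1 : 0 < d := Nat.gcd_pos_of_pos_left _ (by
      have h2 : 2 ≤ x ^ m := by
        calc 2 ≤ x := hx
        _ = x ^ 1 := (pow_one x).symm
        _ ≤ x ^ m := Nat.pow_le_pow_right (by omega) hm
      omega)
    have hcast : ∀ j : ℕ, d ∣ x ^ j - 1 → (x : ZMod d) ^ j = 1 := by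
      intro j hj
      have h2 : ((x ^ j - 1 : ℕ) : ZMod d) = 0 := (ZMod.natCast_eq_zero_iff _ _).mpr hj
      have h3 : ((x ^ j - 1 : ℕ) : ZMod d) = (x : ZMod d) ^ j - 1 := by
        push_cast [Nat.cast_sub (hxp j)]
        ring
      rw [h3] at h2
      linear_combination h2
    have h1 : (x : ZMod d) ^ m = 1 := hcast m (Nat.gcd_dvd_left _ _)
    have h2 : (x : ZMod d) ^ n = 1 := hcast n (Nat.gcd_dvd_right _ _)
    have h3 : (x : ZMod d) ^ Nat.gcd m n = 1 := pow_gcd_eq_one.mpr ⟨h1, h2⟩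
    have h4 : ((x ^ Nat.gcd m n - 1 : ℕ) : ZMod d) = 0 := by
      push_cast [Nat.cast_sub (hxp _)]
      linear_combination h3
    exact (ZMod.natCast_eq_zero_iff _ _).mp h4
  · exact Nat.dvd_gcd (key _ _ (Nat.gcd_dvd_left m n)) (key _ _ (Nat.gcd_dvd_right m n))

lemma my_geom_parity (x t : ℕ) (hx : 2 ≤ x) (hodd : Odd x) :
    (Even ((x ^ t - 1) / (x - 1)) ↔ Even t) := by
  have hx1 : 1 ≤ x := by omega
  have hS : (x ^ t - 1) / (x - 1) = ∑ i ∈ Finset.range t, x ^ i := by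
    apply Nat.div_eq_of_eq_mul_left (by omega)
    have : ((x ^ t - 1 : ℕ) : ℤ) = (((∑ i ∈ Finset.range t, x ^ i) * (x - 1) : ℕ) : ℤ) := by
      rw [Nat.cast_sub (Nat.one_le_pow _ _ (by omega)), Nat.cast_mul,
        Nat.cast_sub hx1, Nat.cast_sum]
      push_cast
      rw [geom_sum_mul]
    exact_mod_cast this
  rw [hS, Nat.even_iff, Nat.even_iff, Finset.sum_nat_mod]
  have : ∑ i ∈ Finset.range t, x ^ i % 2 = ∑ i ∈ Finset.range t, 1 := by
    apply Finset.sum_congr rfl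
    intro i _
    exact Nat.odd_iff.mp (hodd.pow)
  rw [this]
  simp

lemma my_arith (k ℓ : ℕ) (hk : 0 < k) (hl : 0 < ℓ) :
    (¬ Even (2 * k / Nat.gcd ℓ (2 * k))) ↔ Even (ℓ / Nat.gcd k ℓ) := by
  set e := Nat.gcd k ℓ with he
  have he0 : 0 < e := Nat.gcd_pos_of_pos_left _ hk
  obtain ⟨a, ha⟩ : e ∣ k := Nat.gcd_dvd_left k ℓ
  obtain ⟨b, hb⟩ : e ∣ ℓ := Nat.gcd_dvd_right k ℓ
  have hab : Nat.Coprime a b := by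
    have h := Nat.coprime_div_gcd_div_gcd (m := k) (n := ℓ) he0
    rw [← he] at h
    have h1 : k / e = a := by rw [ha, Nat.mul_div_cancel_left _ he0]
    have h2 : ℓ / e = b := by rw [hb, Nat.mul_div_cancel_left _ he0]
    rwa [h1, h2] at h
  have ha0 : 0 < a := by
    rcases Nat.eq_zero_or_pos a with h | h
    · subst h; simp at ha; omega
    · exact h
  have hgcd : Nat.gcd ℓ (2 * k) = e * Nat.gcd b (2 * a) := by
    rw [hb, ha, show 2 * (e * a) = e * (2 * a) by ring, Nat.gcd_mul_left]
  have hq : 2 * k / Nat.gcd ℓ (2 * k) = 2 * a / Nat.gcd b (2 * a) := by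
    rw [hgcd, ha, show 2 * (e * a) = e * (2 * a) by ring, Nat.mul_div_mul_left _ _ he0]
  have hlq : ℓ / e = b := by rw [hb, Nat.mul_div_cancel_left _ he0]
  rw [hq, hlq]
  rcases Nat.even_or_odd b with hbe | hbo
  · have haodd : ¬ (2 ∣ a) := by
      intro h2a
      have : 2 ∣ Nat.gcd a b := Nat.dvd_gcd h2a hbe.two_dvd
      rw [hab] at this; omega
    have h2 : Nat.gcd b (2 * a) = 2 := by
      apply Nat.dvd_antisymm
      · have h1 : Nat.gcd b (2 * a) ∣ Nat.gcd (2 * b) (2 * a) :=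
          Nat.dvd_gcd ((Nat.gcd_dvd_left _ _).trans ⟨2, by ring⟩) (Nat.gcd_dvd_right _ _)
        rwa [Nat.gcd_mul_left, Nat.gcd_comm b a, hab, mul_one] at h1
      · exact Nat.dvd_gcd hbe.two_dvd ⟨a, rfl⟩
    rw [h2, Nat.mul_div_cancel_left _ (by norm_num)]
    simp only [hbe, iff_true]
    rw [Nat.even_iff]
    omega
  · have hgodd : Odd (Nat.gcd b (2 * a)) := hbo.of_dvd_nat (Nat.gcd_dvd_left _ _)
    have hdvda : Nat.gcd b (2 * a) ∣ a := by
      have hnd : ¬ 2 ∣ Nat.gcd b (2 * a) := by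
        have := Nat.odd_iff.mp hgodd; omega
      have hco : Nat.Coprime (Nat.gcd b (2 * a)) 2 :=
        Nat.coprime_comm.mp ((Nat.Prime.coprime_iff_not_dvd Nat.prime_two).mpr hnd)
      exact hco.dvd_of_dvd_mul_left (Nat.gcd_dvd_right _ _)
    rw [Nat.mul_div_assoc 2 hdvda]
    constructor
    · intro h; exact absurd (even_two_mul _) h
    · intro h; exact absurd h (by simpa [Nat.odd_iff] using hbo)

lemma my_cyclic_pow {G : Type*} [CommGroup G] [Fintype G] [IsCyclic G] (m : ℕ) (u : G) :
    (∃ w : G, w ^ m = u) ↔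
      u ^ (Fintype.card G / Nat.gcd m (Fintype.card G)) = 1 := by
  set N := Fintype.card G with hN
  set d := Nat.gcd m N with hd
  have hN0 : 0 < N := Fintype.card_pos
  have hd0 : 0 < d := Nat.gcd_pos_of_pos_right _ hN0
  constructor
  · rintro ⟨w, rfl⟩
    rw [← pow_mul]
    have key : m * (N / d) = (m / d) * N := by
      obtain ⟨A, hA⟩ : d ∣ m := Nat.gcd_dvd_left m N
      obtain ⟨B, hB⟩ : d ∣ N := Nat.gcd_dvd_right m N
      rw [hA, hB, Nat.mul_div_cancel_left _ hd0, Nat.mul_div_cancel_left _ hd0]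
      ring
    rw [key, pow_mul]
    exact pow_card_eq_one
  · intro h
    obtain ⟨g, hg⟩ := IsCyclic.exists_generator (α := G)
    have hog : orderOf g = N := by
      rw [orderOf_eq_card_of_forall_mem_zpowers hg, Nat.card_eq_fintype_card]
    obtain ⟨s, hs⟩ : ∃ s : ℕ, g ^ s = u := by
      have h1 := hg u
      rwa [← mem_powers_iff_mem_zpowers, Submonoid.mem_powers_iff] at h1
    have h1 : g ^ (s * (N / d)) = 1 := by rw [pow_mul, hs, h]
    have h2 : N ∣ s * (N / d) := by
      have h2' := orderOf_dvd_of_pow_eq_one h1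
      rwa [hog] at h2'
    have hNd0 : 0 < N / d := Nat.div_pos (Nat.le_of_dvd hN0 (Nat.gcd_dvd_right m N)) hd0
    have hds : d ∣ s := by
      obtain ⟨c, hc⟩ := h2
      refine ⟨c, Nat.eq_of_mul_eq_mul_right hNd0 ?_⟩
      have hNd : d * (N / d) = N := Nat.mul_div_cancel' (Nat.gcd_dvd_right m N)
      calc s * (N / d) = N * c := hc
        _ = d * (N / d) * c := by rw [hNd]
        _ = d * c * (N / d) := by ring
    obtain ⟨c, hc⟩ := hds
    have hbez : (d : ℤ) = m * Nat.gcdA m N + N * Nat.gcdB m N := Nat.gcd_eq_gcd_ab m N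
    refine ⟨g ^ ((c : ℤ) * Nat.gcdA m N), ?_⟩
    have hzp : (g ^ ((c : ℤ) * Nat.gcdA m N)) ^ m = g ^ ((c : ℤ) * Nat.gcdA m N * m) := by
      rw [← zpow_natCast (g ^ ((c : ℤ) * Nat.gcdA m N)) m, ← zpow_mul]
    rw [hzp, ← hs]
    have hdvd : ((orderOf g : ℤ)) ∣ ((c : ℤ) * Nat.gcdA m N * m - s) := by
      rw [hog]
      have hs2 : (s : ℤ) = d * c := by exact_mod_cast hc
      have heq : (c : ℤ) * Nat.gcdA m N * m - s = (-(c * Nat.gcdB m N)) * N := by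
        rw [hs2, hbez]; ring
      rw [heq]
      exact Dvd.intro_left _ rfl
    have h3 : g ^ ((c : ℤ) * Nat.gcdA m N * m - s) = 1 :=
      orderOf_dvd_iff_zpow_eq_one.mp hdvd
    rw [zpow_sub] at h3
    have h4 := mul_inv_eq_one.mp h3
    rw [h4, zpow_natCast]

end Aux

/-- A function between (additive groups of) finite abelian groups is planar if every
nonzero-direction derivative hits every value exactly once. -/
def IsPlanarFn {G H : Type*} [AddGroup G] [AddGroup H] (f : G → H) : Prop :=
  ∀ a : G, a ≠ 0 → ∀ b : H, ∃! x : G, f (x + a) - f x = b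

theorem stmt12 (p k ℓ : ℕ) (hp : p.Prime) (hodd : Odd p) (hk : 0 < k) (hl : 0 < ℓ)
    (q Q : ℕ) (hq : q = p ^ k) (hQ : Q = p ^ ℓ)
    (F : Type) [Field F] [Fintype F] (hF : Fintype.card F = p ^ (2 * k)) :
    IsPlanarFn (fun x : F => x ^ (Q + 1)) ↔ Even (ℓ / Nat.gcd k ℓ) := by
  classical
  haveI := Fact.mk hp
  have hp2 : p ≠ 2 := by
    intro h; rw [h] at hodd; exact (Nat.not_odd_iff_even.mpr (even_two)) hodd
  have hp3 : 3 ≤ p := by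
    have := hp.two_le
    rcases Nat.lt_or_ge p 3 with h | h
    · interval_cases p <;> simp_all
    · exact h
  -- characteristic of F is p
  have hrc : ringChar F = p := by
    obtain ⟨n, hrp, hcard⟩ := FiniteField.card F (ringChar F)
    have hdvd : p ∣ (ringChar F) ^ (n : ℕ) := by
      rw [← hcard, hF]
      exact dvd_pow_self p (by omega)
    exact ((Nat.prime_dvd_prime_iff_eq hp hrp).mp (hp.dvd_of_dvd_pow hdvd)).symm
  haveI hch : CharP F p := ringChar.of_eq hrc
  have hrc2 : ringChar F ≠ 2 := by rw [hrc]; exact hp2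
  have hQ2 : 2 ≤ Q := by
    rw [hQ]
    calc 2 ≤ p := by omega
    _ = p ^ 1 := (pow_one p).symm
    _ ≤ p ^ ℓ := Nat.pow_le_pow_right (by omega) hl
  have hQ1 : Q - 1 + 1 = Q := by omega
  -- Frobenius
  have hfrob : ∀ x y : F, (x + y) ^ Q = x ^ Q + y ^ Q := by
    intro x y; rw [hQ]; exact add_pow_char_pow x y p ℓ
  have hfrobs : ∀ x y : F, (x - y) ^ Q = x ^ Q - y ^ Q := by
    intro x y; rw [hQ]; exact sub_pow_char_pow x y ℓ
  have hderiv : ∀ a x : F, (x + a) ^ (Q + 1) - x ^ (Q + 1) =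
      (a * x ^ Q + a ^ Q * x) + a ^ (Q + 1) := by
    intro a x
    have h1 : (x + a) ^ (Q + 1) = ((x ^ Q) + (a ^ Q)) * (x + a) := by
      rw [pow_succ, hfrob]
    rw [h1, pow_succ x Q, pow_succ a Q]
    ring
  -- Step A: planarity ↔ all derivative maps bijective
  have stepA : IsPlanarFn (fun x : F => x ^ (Q + 1)) ↔
      ∀ a : F, a ≠ 0 → Function.Bijective (fun x : F => a * x ^ Q + a ^ Q * x) := by
    constructor
    · intro hpl a ha
      rw [Function.bijective_iff_existsUnique]
      intro b
      obtain ⟨x, hx, hux⟩ := hpl a ha (b + a ^ (Q + 1))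
      simp only [hderiv] at hx
      refine ⟨x, by simpa using add_right_cancel hx, ?_⟩
      intro y hy
      exact hux y (by simp only [hderiv]; rw [hy])
    · intro hbij a ha b
      obtain ⟨x, hx, hux⟩ :=
        (Function.bijective_iff_existsUnique _).mp (hbij a ha) (b - a ^ (Q + 1))
      refine ⟨x, by simp only [hderiv]; rw [hx]; ring, ?_⟩
      intro y hy
      simp only [hderiv] at hy
      exact hux y (by simp only; rw [eq_sub_of_add_eq hy])
  -- Step B: bijectivity ↔ no w with w^(Q-1) = -1
  have stepB : (∀ a : F, a ≠ 0 → Function.Bijective (fun x : F => a * x ^ Q + a ^ Q * x)) ↔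
      ¬ ∃ w : F, w ≠ 0 ∧ w ^ (Q - 1) = -1 := by
    constructor
    · rintro hbij ⟨w, hw0, hw⟩
      have hinj := (hbij 1 one_ne_zero).injective
      have hwQ : w ^ Q = -w := by
        calc w ^ Q = w ^ (Q - 1) * w := by rw [← pow_succ, hQ1]
        _ = -1 * w := by rw [hw]
        _ = -w := by ring
      have h0 : (fun x : F => 1 * x ^ Q + 1 ^ Q * x) w =
          (fun x : F => 1 * x ^ Q + 1 ^ Q * x) 0 := by
        simp only [one_mul, one_pow, hwQ]
        rw [zero_pow (by omega : Q ≠ 0)]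
        ring
      exact hw0 (hinj h0)
    · intro hnex a ha
      rw [← Finite.injective_iff_bijective]
      intro x y hxy
      simp only at hxy
      by_contra hne
      have hz0 : x - y ≠ 0 := sub_ne_zero.mpr hne
      set z := x - y with hzdef
      have hz : a * z ^ Q + a ^ Q * z = 0 := by
        rw [hzdef, hfrobs]
        linear_combination hxy
      have e1 : z ^ Q = z ^ (Q - 1) * z := by rw [← pow_succ, hQ1]
      have e2 : a ^ Q = a ^ (Q - 1) * a := by rw [← pow_succ, hQ1]
      rw [e1, e2] at hz
      have h5 : (z ^ (Q - 1) + a ^ (Q - 1)) * (a * z) = 0 := by linear_combination hz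
      have h6 : z ^ (Q - 1) + a ^ (Q - 1) = 0 := by
        rcases mul_eq_zero.mp h5 with h | h
        · exact h
        · exact absurd h (mul_ne_zero ha hz0)
      have key : z ^ (Q - 1) = - a ^ (Q - 1) := by linear_combination h6
      apply hnex
      refine ⟨z * a⁻¹, mul_ne_zero hz0 (inv_ne_zero ha), ?_⟩
      rw [mul_pow, key, inv_pow]
      rw [neg_mul, mul_inv_cancel₀ (pow_ne_zero _ ha)]
  -- Step C/D: existence of w ↔ parity condition
  have hm1 : Q - 1 ≥ 1 := by omega
  have hcardu : Fintype.card Fˣ = p ^ (2 * k) - 1 := by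
    rw [Fintype.card_units, hF]
  have hne11 : (-1 : Fˣ) ≠ 1 := by
    intro h
    have h2 : ((-1 : Fˣ) : F) = ((1 : Fˣ) : F) := by rw [h]
    simp only [Units.val_neg, Units.val_one] at h2
    exact Ring.neg_one_ne_one_of_char_ne_two hrc2 h2
  have stepC : (∃ w : F, w ≠ 0 ∧ w ^ (Q - 1) = -1) ↔
      (∃ w : Fˣ, w ^ (Q - 1) = (-1 : Fˣ)) := by
    constructor
    · rintro ⟨w, hw0, hw⟩
      refine ⟨Units.mk0 w hw0, ?_⟩
      ext
      push_cast
      simpa using hw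
    · rintro ⟨w, hw⟩
      refine ⟨(w : F), w.ne_zero, ?_⟩
      have := congrArg (Units.val) hw
      push_cast at this
      simpa using this
  have stepD : (∃ w : Fˣ, w ^ (Q - 1) = (-1 : Fˣ)) ↔
      Even ((p ^ (2 * k) - 1) / Nat.gcd (Q - 1) (p ^ (2 * k) - 1)) := by
    rw [my_cyclic_pow (Q - 1) (-1 : Fˣ), hcardu]
    exact neg_one_pow_eq_one_iff_even hne11
  -- numeric computation
  have hg := Nat.gcd_dvd_right ℓ (2 * k)
  set g := Nat.gcd ℓ (2 * k) with hgdef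
  have hg0 : 0 < g := Nat.gcd_pos_of_pos_left _ hl
  have hgcdval : Nat.gcd (Q - 1) (p ^ (2 * k) - 1) = p ^ g - 1 := by
    rw [hQ]
    exact my_gcd_pow_sub_one p ℓ (2 * k) (by omega) hl
  have hx2 : 2 ≤ p ^ g := by
    calc 2 ≤ p := by omega
    _ = p ^ 1 := (pow_one p).symm
    _ ≤ p ^ g := Nat.pow_le_pow_right (by omega) hg0
  have hpow : p ^ (2 * k) = (p ^ g) ^ (2 * k / g) := by
    rw [← pow_mul, Nat.mul_div_cancel' hg]
  have hparity : Even ((p ^ (2 * k) - 1) / Nat.gcd (Q - 1) (p ^ (2 * k) - 1)) ↔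
      Even (2 * k / g) := by
    rw [hgcdval, hpow]
    exact my_geom_parity (p ^ g) (2 * k / g) hx2 (hodd.pow)
  rw [stepA, stepB, stepC, stepD, hparity]
  exact my_arith k ℓ hk hl
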